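/- Let h : [0,1] → ℝ be piecewise constant with breakpoints 0 = p_0 < p_1 < ... < p_m = 1 and values c_1 ≤ ... ≤ c_m (h = c_{i+1} on (p_i, p_{i+1}]), and set c_0 = 0. Then for all p ∈ (0,1], h(p) = Σ_{i=0}^{m-1} (c_{i+1} - c_i)(1 - p_i) · h_{p_i}(p), where h_q denotes the threshold function h_q(p) = 0 for p ≤ q and 1/(1-q) for p > q. -/

import Mathlib

/-- The threshold function `h_q`: `0` on `[0,q]` and `1/(1-q)` on `(q,1]`. -/
noncomputable def thresholdFn (q p : ℝ) : ℝ := if p ≤ q then 0 else 1 / (1 - q)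

lemma telescope_aux (m : ℕ) (c : Fin (m + 1) → ℝ) (j : Fin m) :
    ∑ i : Fin m, (if (i : ℕ) ≤ (j : ℕ) then c i.succ - c i.castSucc else 0)
      = c j.succ - c 0 := by
  set d : ℕ → ℝ := fun n => c ⟨min n m, by omega⟩ with hd
  have h: ∀ i : Fin m, (if (i : ℕ) ≤ (j : ℕ) then c i.succ - c i.castSucc else 0)
      = (fun n => if n ≤ (j : ℕ) then d (n + 1) - d n else 0) (i : ℕ) := by
    intro i
    have h1 : c i.succ = d ((i : ℕ) + 1) := by
      simp only [hd]; congr 1; ext; simp [Nat.min_eq_left (Nat.succ_le_of_lt i.isLt)]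
    have h2 : c i.castSucc = d (i : ℕ) := by
      simp only [hd]; congr 1; ext; simp [Nat.min_eq_left (le_of_lt i.isLt)]
    rw [h1, h2]
  rw [Finset.sum_congr rfl (fun i _ => h i),
    Fin.sum_univ_eq_sum_range (fun n => if n ≤ (j : ℕ) then d (n + 1) - d n else 0) m]
  have hfilt : (Finset.range m).filter (fun n => n ≤ (j : ℕ)) = Finset.range ((j : ℕ) + 1) := by
    ext n
    simp only [Finset.mem_filter, Finset.mem_range]
    have := j.isLt
    omega
  rw [← Finset.sum_filter, hfilt, Finset.sum_range_sub]
  have h1 : c j.succ = d ((j : ℕ) + 1) := by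
    simp only [hd]; congr 1; ext; simp [Nat.min_eq_left (Nat.succ_le_of_lt j.isLt)]
  have h2 : c 0 = d 0 := by
    simp only [hd]; congr 1
  rw [h1, h2]

/-- A nondecreasing piecewise constant function `h` with breakpoints
`0 = p₀ < ⋯ < p_m = 1`, values `c₁ ≤ ⋯ ≤ c_m` (with `c₀ = 0`) decomposes as
`h(p) = ∑_{i=0}^{m-1} (c_{i+1} - c_i)(1 - p_i) h_{p_i}(p)` on `(0,1]`. -/
theorem threshold_decomposition (m : ℕ) (pts : Fin (m + 1) → ℝ)
    (c : Fin (m + 1) → ℝ) (h : ℝ → ℝ)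
    (hp0 : pts 0 = 0) (hpm : pts (Fin.last m) = 1) (hpmono : StrictMono pts)
    (hc0 : c 0 = 0) (hcmono : Monotone c)
    (hstep : ∀ i : Fin m, ∀ p ∈ Set.Ioc (pts i.castSucc) (pts i.succ),
      h p = c i.succ) :
    ∀ p ∈ Set.Ioc (0 : ℝ) 1,
      h p = ∑ i : Fin m,
        (c i.succ - c i.castSucc) * (1 - pts i.castSucc) *
          thresholdFn (pts i.castSucc) p := by
  intro p hp
  obtain ⟨hp0', hp1⟩ := hp
  rcases Nat.eq_zero_or_pos m with h0 | hm
  · subst h0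
    rw [show Fin.last 0 = 0 from rfl, hp0] at hpm
    norm_num at hpm
  classical
  set S := Finset.univ.filter (fun i : Fin (m + 1) => pts i < p) with hS
  have hne : S.Nonempty := ⟨0, by simp [hS, hp0, hp0']⟩
  set j' := S.max' hne with hj'
  have hj'mem : j' ∈ S := S.max'_mem hne
  have hj'lt : pts j' < p := by simpa [hS] using hj'mem
  have hj'ne : j' ≠ Fin.last m := by
    intro hcon
    rw [hcon, hpm] at hj'lt
    linarith
  set j : Fin m := j'.castPred hj'ne with hj
  have hjc : j.castSucc = j' := Fin.castSucc_castPred _ _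
  have hlow : pts j.castSucc < p := by rw [hjc]; exact hj'lt
  have hhigh : p ≤ pts j.succ := by
    by_contra hcon
    push_neg at hcon
    have hmem : j.succ ∈ S := by simp [hS, hcon]
    have := S.le_max' _ hmem
    rw [← hj'] at this
    have h2 : j' < j.succ := by
      rw [← hjc]; exact Fin.castSucc_lt_succ
    exact absurd this (not_le.mpr h2)
  have hhp : h p = c j.succ := hstep j p ⟨hlow, hhigh⟩
  have hterm : ∀ i : Fin m,
      (c i.succ - c i.castSucc) * (1 - pts i.castSucc) * thresholdFn (pts i.castSucc) p
        = (if (i : ℕ) ≤ (j : ℕ) then c i.succ - c i.castSucc else 0) := by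
    intro i
    have hq1 : pts i.castSucc < 1 := by
      rw [← hpm]; exact hpmono (Fin.castSucc_lt_last i)
    by_cases hle : (i : ℕ) ≤ (j : ℕ)
    · have hmono : pts i.castSucc ≤ pts j.castSucc :=
        hpmono.monotone (Fin.le_def.mpr (by simp only [Fin.coe_castSucc]; exact hle))
      have hpp : pts i.castSucc < p := lt_of_le_of_lt hmono hlow
      have hne0 : (1 : ℝ) - pts i.castSucc ≠ 0 :=
        ne_of_gt (by linarith : (0:ℝ) < 1 - pts i.castSucc)
      rw [thresholdFn, if_neg (not_le.mpr hpp), if_pos hle, mul_one_div,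
        mul_div_assoc, div_self hne0, mul_one]
    · have hgt : (j : ℕ) < (i : ℕ) := not_le.mp hle
      have hmono : pts j.succ ≤ pts i.castSucc :=
        hpmono.monotone (Fin.le_def.mpr (by simp only [Fin.val_succ, Fin.coe_castSucc]; omega))
      have hpp : p ≤ pts i.castSucc := le_trans hhigh hmono
      rw [thresholdFn, if_pos hpp, if_neg hle]
      ring
  rw [hhp, Finset.sum_congr rfl (fun i _ => hterm i), telescope_aux, hc0, sub_zero]
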